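/- Let X be a Banach space, c ∈ (0,1), and let (x_n)_{n ≥ 1} be a normalized sequence in X such that for all k ≥ 1, all scalars a_1, …, a_k, and all indices k ≤ n_1 < ⋯ < n_k, one has ‖Σ_{i=1}^k a_i x_{n_i}‖ ≥ c Σ_{i=1}^k |a_i|. Then for every N ≥ 1 there exists a map f : T_N → X such that c·d(s,t) ≤ ‖f(s) - f(t)‖ ≤ d(s,t) for all s, t ∈ T_N. In particular, the family (T_N)_{N ≥ 1} equi-Lipschitz embeds into X. -/

import Mathlib

def commonPrefixLen : List ℕ → List ℕ → ℕ
  | a :: s, b :: t => if a = b then commonPrefixLen s t + 1 else 0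
  | _, _ => 0

lemma cpl_le_left : ∀ s t : List ℕ, commonPrefixLen s t ≤ s.length
  | a :: s, b :: t => by
    simp only [commonPrefixLen]
    split
    · simpa using cpl_le_left s t
    · simp
  | [], _ => by simp [commonPrefixLen]
  | _ :: _, [] => by simp [commonPrefixLen]

lemma cpl_le_right : ∀ s t : List ℕ, commonPrefixLen s t ≤ t.length
  | a :: s, b :: t => by
    simp only [commonPrefixLen]
    split
    · simpa using cpl_le_right s t
    · simp
  | [], _ => by simp [commonPrefixLen]
  | _ :: _, [] => by simp [commonPrefixLen]

lemma take_eq_of_le_cpl : ∀ (s t : List ℕ) (i : ℕ), i ≤ commonPrefixLen s t →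
    s.take i = t.take i
  | a :: s, b :: t, i, hi => by
    simp only [commonPrefixLen] at hi
    split at hi
    · subst ‹a = b›
      cases i with
      | zero => simp
      | succ i => simp [List.take_succ_cons, take_eq_of_le_cpl s t i (by omega)]
    · interval_cases i
      simp
  | [], t, i, hi => by
    have : commonPrefixLen [] t = 0 := by cases t <;> rfl
    rw [this] at hi
    interval_cases i; simp
  | a :: s, [], i, hi => by
    have : commonPrefixLen (a :: s) [] = 0 := rfl
    rw [this] at hi
    interval_cases i; simp

lemma take_ne_of_cpl_lt : ∀ (s t : List ℕ) (m : ℕ), commonPrefixLen s t < m →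
    m ≤ s.length → m ≤ t.length → s.take m ≠ t.take m
  | a :: s, b :: t, m, hm, hs, ht => by
    simp only [commonPrefixLen] at hm
    split at hm
    · subst ‹a = b›
      obtain ⟨m, rfl⟩ : ∃ m', m = m' + 1 := ⟨m - 1, by omega⟩
      simp only [List.take_succ_cons, ne_eq, List.cons.injEq, true_and]
      exact take_ne_of_cpl_lt s t m (by omega) (by simpa using hs) (by simpa using ht)
    · obtain ⟨m, rfl⟩ : ∃ m', m = m' + 1 := ⟨m - 1, by omega⟩
      simp only [List.take_succ_cons, ne_eq, List.cons.injEq]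
      tauto
  | [], t, m, hm, hs, ht => by simp at hs; omega
  | a :: s, [], m, hm, hs, ht => by simp at ht; omega


/-- The hyperbolic distance `d(s,t) = |s| + |t| - 2|a_{s,t}|` on trees of finite sequences. -/
def treeDist (s t : List ℕ) : ℕ :=
  (s.length - commonPrefixLen s t) + (t.length - commonPrefixLen s t)

lemma sum_orderIsoOfFin {M : Type*} [AddCommMonoid M] (S : Finset ℕ) {k : ℕ}
    (h : S.card = k) (g : ℕ → M) :
    ∑ n ∈ S, g n = ∑ i : Fin k, g (S.orderIsoOfFin h i) := by
  rw [← Finset.sum_coe_sort S g]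
  exact (Fintype.sum_equiv (S.orderIsoOfFin h).toEquiv _ _ (fun i => rfl)).symm

/-- If a Banach space `X` contains a normalized sequence satisfying a lower `ℓ₁`
estimate with constant `c` (over indices `k ≤ n₁ < ⋯ < n_k`), then each countably
branching tree `T_N` embeds into `X` with `c·d(s,t) ≤ ‖f(s) - f(t)‖ ≤ d(s,t)`;
in particular the family `(T_N)` equi-Lipschitz embeds into `X`. -/
theorem stmt_3 {X : Type*} [NormedAddCommGroup X] [NormedSpace ℝ X] [CompleteSpace X]
    (c : ℝ) (hc0 : 0 < c) (hc1 : c < 1)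
    (x : ℕ → X) (hnorm : ∀ n, ‖x n‖ = 1)
    (hlow : ∀ k : ℕ, 1 ≤ k → ∀ a : Fin k → ℝ, ∀ n : Fin k → ℕ,
      StrictMono n → (∀ i, k ≤ n i) →
      ‖∑ i, a i • x (n i)‖ ≥ c * ∑ i, |a i|) :
    ∀ N : ℕ, 1 ≤ N → ∃ f : {l : List ℕ // l.length ≤ N} → X,
      ∀ s t : {l : List ℕ // l.length ≤ N},
        c * (treeDist s.1 t.1 : ℝ) ≤ ‖f s - f t‖ ∧
        ‖f s - f t‖ ≤ (treeDist s.1 t.1 : ℝ) := by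
  intro N hN
  -- key ℓ₁ lemma over arbitrary finsets
  have key : ∀ S : Finset ℕ, (∀ m ∈ S, S.card ≤ m) → ∀ a : ℕ → ℝ,
      c * ∑ n ∈ S, |a n| ≤ ‖∑ n ∈ S, a n • x n‖ := by
    intro S hS a
    rcases S.eq_empty_or_nonempty with rfl | hne
    · simp
    · have hk : 1 ≤ S.card := Finset.card_pos.mpr hne
      set k := S.card with hkdef
      let e := S.orderIsoOfFin hkdef.symm
      have hmono : StrictMono (fun i : Fin k => (e i : ℕ)) :=
        fun i j h => Subtype.coe_lt_coe.mpr (e.strictMono h)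
      have := hlow k hk (fun i => a (e i)) (fun i => (e i : ℕ)) hmono
        (fun i => hS _ (e i).2)
      rw [sum_orderIsoOfFin S hkdef.symm (fun n => |a n|),
        sum_orderIsoOfFin S hkdef.symm (fun n => a n • x n)]
      exact this
  classical
  -- the injection Φ
  set Φ : List ℕ → ℕ := fun u => 2 * N + Encodable.encode u with hΦdef
  have hΦinj : Function.Injective Φ := fun u v h =>
    Encodable.encode_injective (Nat.add_left_cancel h)
  have hΦge : ∀ u, 2 * N ≤ Φ u := fun u => Nat.le_add_right _ _
  refine ⟨fun s => ∑ i ∈ Finset.range s.1.length, x (Φ (s.1.take (i + 1))), ?_⟩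
  intro s t
  set p := commonPrefixLen s.1 t.1 with hpdef
  have hps : p ≤ s.1.length := cpl_le_left _ _
  have hpt : p ≤ t.1.length := cpl_le_right _ _
  set A : Finset ℕ := (Finset.Ico p s.1.length).image (fun i => Φ (s.1.take (i + 1)))
    with hAdef
  set B : Finset ℕ := (Finset.Ico p t.1.length).image (fun i => Φ (t.1.take (i + 1)))
    with hBdef
  have hinjS : Set.InjOn (fun i => Φ (s.1.take (i + 1))) (Finset.Ico p s.1.length) := by
    intro i hi j hj h
    simp only [Finset.coe_Ico, Set.mem_Ico] at hi hj
    have := hΦinj h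
    have hli : (s.1.take (i + 1)).length = i + 1 := List.length_take_of_le (by omega)
    have hlj : (s.1.take (j + 1)).length = j + 1 := List.length_take_of_le (by omega)
    rw [this] at hli
    omega
  have hinjT : Set.InjOn (fun i => Φ (t.1.take (i + 1))) (Finset.Ico p t.1.length) := by
    intro i hi j hj h
    simp only [Finset.coe_Ico, Set.mem_Ico] at hi hj
    have := hΦinj h
    have hli : (t.1.take (i + 1)).length = i + 1 := List.length_take_of_le (by omega)
    have hlj : (t.1.take (j + 1)).length = j + 1 := List.length_take_of_le (by omega)
    rw [this] at hli
    omega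
  have hcardA : A.card = s.1.length - p := by
    rw [hAdef, Finset.card_image_of_injOn hinjS, Nat.card_Ico]
  have hcardB : B.card = t.1.length - p := by
    rw [hBdef, Finset.card_image_of_injOn hinjT, Nat.card_Ico]
  have hdisj : Disjoint A B := by
    rw [Finset.disjoint_left]
    rintro n hnA hnB
    simp only [hAdef, hBdef, Finset.mem_image, Finset.mem_Ico] at hnA hnB
    obtain ⟨i, hi, rfl⟩ := hnA
    obtain ⟨j, hj, hij⟩ := hnB
    have htake := hΦinj hij.symm
    have hli : (s.1.take (i + 1)).length = i + 1 := List.length_take_of_le (by omega)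
    have hlj : (t.1.take (j + 1)).length = j + 1 := List.length_take_of_le (by omega)
    have hijeq : i = j := by rw [htake] at hli; omega
    subst hijeq
    exact take_ne_of_cpl_lt s.1 t.1 (i + 1) (by omega) (by omega) (by omega) htake
  -- f s - f t = ∑_A x - ∑_B x
  have hsplit : ∀ (l : List ℕ), l.length ≤ N →
      ∑ i ∈ Finset.range l.length, x (Φ (l.take (i + 1))) =
      (∑ i ∈ Finset.range (min p l.length), x (Φ (l.take (i + 1)))) +
      ∑ i ∈ Finset.Ico (min p l.length) l.length, x (Φ (l.take (i + 1))) := by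
    intro l hl
    rw [Finset.range_eq_Ico, ← Finset.sum_Ico_consecutive _ (Nat.zero_le _) (min_le_right p l.length), Finset.range_eq_Ico]
  have hmins : min p s.1.length = p := min_eq_left hps
  have hmint : min p t.1.length = p := min_eq_left hpt
  have hfirst : ∀ i ∈ Finset.range p, x (Φ (s.1.take (i + 1))) = x (Φ (t.1.take (i + 1))) := by
    intro i hi
    rw [take_eq_of_le_cpl s.1 t.1 (i + 1) (by simp at hi; omega)]
  have hdiff : (∑ i ∈ Finset.range s.1.length, x (Φ (s.1.take (i + 1)))) -
      (∑ i ∈ Finset.range t.1.length, x (Φ (t.1.take (i + 1)))) =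
      (∑ n ∈ A, x n) - ∑ n ∈ B, x n := by
    rw [hsplit s.1 s.2, hsplit t.1 t.2, hmins, hmint,
      Finset.sum_congr rfl hfirst]
    have hA : ∑ i ∈ Finset.Ico p s.1.length, x (Φ (s.1.take (i + 1))) = ∑ n ∈ A, x n :=
      (Finset.sum_image (fun i hi j hj h => hinjS hi hj h)).symm
    have hB : ∑ i ∈ Finset.Ico p t.1.length, x (Φ (t.1.take (i + 1))) = ∑ n ∈ B, x n :=
      (Finset.sum_image (fun i hi j hj h => hinjT hi hj h)).symm
    rw [hA, hB]
    abel
  rw [hdiff]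
  -- set up coefficients
  set a : ℕ → ℝ := fun n => if n ∈ A then 1 else -1 with hadef
  have hsum_eq : ∑ n ∈ A ∪ B, a n • x n = (∑ n ∈ A, x n) - ∑ n ∈ B, x n := by
    rw [Finset.sum_union hdisj]
    have h1 : ∀ n ∈ A, a n • x n = x n := by
      intro n hn; simp [hadef, hn]
    have h2 : ∀ n ∈ B, a n • x n = -x n := by
      intro n hn
      have : n ∉ A := Finset.disjoint_right.mp hdisj hn
      simp [hadef, this]
    rw [Finset.sum_congr rfl h1, Finset.sum_congr rfl h2, Finset.sum_neg_distrib]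
    abel
  have habs : ∀ n, |a n| = 1 := by
    intro n
    by_cases h : n ∈ A <;> simp [hadef, h]
  have hcardU : (A ∪ B).card = treeDist s.1 t.1 := by
    rw [Finset.card_union_of_disjoint hdisj, hcardA, hcardB, treeDist]
  have hsumabs : ∑ n ∈ A ∪ B, |a n| = (treeDist s.1 t.1 : ℝ) := by
    rw [Finset.sum_congr rfl (fun n _ => habs n), Finset.sum_const, nsmul_eq_mul,
      mul_one, hcardU]
  constructor
  · -- lower bound
    rcases Finset.eq_empty_or_nonempty (A ∪ B) with hU | hU
    · have : treeDist s.1 t.1 = 0 := by rw [← hcardU, hU]; simp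
      rw [this]
      simp
    · have hle : ∀ m ∈ A ∪ B, (A ∪ B).card ≤ m := by
        intro m hm
        have h2N : 2 * N ≤ m := by
          rcases Finset.mem_union.mp hm with h | h <;>
          · simp only [hAdef, hBdef, Finset.mem_image] at h
            obtain ⟨i, _, rfl⟩ := h
            exact hΦge _
        have : (A ∪ B).card ≤ 2 * N := by
          rw [hcardU, treeDist]
          have := s.2; have := t.2
          omega
        omega
      have := key (A ∪ B) hle a
      rw [hsum_eq, hsumabs] at this
      exact this
  · -- upper bound
    calc ‖(∑ n ∈ A, x n) - ∑ n ∈ B, x n‖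
        = ‖∑ n ∈ A ∪ B, a n • x n‖ := by rw [hsum_eq]
      _ ≤ ∑ n ∈ A ∪ B, ‖a n • x n‖ := norm_sum_le _ _
      _ = ∑ n ∈ A ∪ B, |a n| := by
          refine Finset.sum_congr rfl fun n _ => ?_
          rw [norm_smul, hnorm, mul_one, Real.norm_eq_abs]
      _ = (treeDist s.1 t.1 : ℝ) := hsumabs
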